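/- arXiv:1311.7105 — 5 statements merged into one kernel-verified Lean document; each statement's English description precedes it below -/
import Mathlib

section
/- Let A ∈ ℝ^{n×n} be a symmetric matrix with ‖A‖_F = 1. Let 0 < δ ≤ ε < 1, let λ ∈ ℝ with |λ| ≥ 3ε, and let v ∈ ℝⁿ be a unit vector such that the matrix B = A − λ·(v vᵀ) satisfies ‖Bv‖₂ ≤ δ. Then ‖B‖_F² ≤ 1 − 3ε². -/
open Matrix

/-- If A is symmetric with Frobenius norm 1, 0 < δ ≤ ε < 1, |λ| ≥ 3ε,
v is a unit vector, and B = A − λ·v vᵀ satisfies ‖Bv‖₂ ≤ δ, then ‖B‖_F² ≤ 1 − 3ε². -/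
theorem stmt_1 {n : ℕ} (A : Matrix (Fin n) (Fin n) ℝ) (hA : A.IsSymm)
    (hAF : Real.sqrt (∑ i, ∑ j, A i j ^ 2) = 1)
    (δ ε : ℝ) (hδ : 0 < δ) (hδε : δ ≤ ε) (hε : ε < 1)
    (lam : ℝ) (hlam : 3 * ε ≤ |lam|)
    (v : Fin n → ℝ) (hv : Real.sqrt (∑ i, v i ^ 2) = 1)
    (B : Matrix (Fin n) (Fin n) ℝ) (hB : B = A - lam • vecMulVec v v)
    (hBv : Real.sqrt (∑ i, (B.mulVec v i) ^ 2) ≤ δ) :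
    ∑ i, ∑ j, B i j ^ 2 ≤ 1 - 3 * ε ^ 2 := by
  have hε0 : 0 < ε := lt_of_lt_of_le hδ hδε
  have hA2 : ∑ i, ∑ j, A i j ^ 2 = 1 := by
    have h := congrArg (· ^ 2) hAF
    have h' : Real.sqrt (∑ i, ∑ j, A i j ^ 2) ^ 2 = ∑ i, ∑ j, A i j ^ 2 :=
      Real.sq_sqrt (Finset.sum_nonneg fun i _ =>
      Finset.sum_nonneg fun j _ => sq_nonneg (A i j))
    rw [hAF] at h'; linarith
  have hv2 : ∑ i, v i ^ 2 = 1 := by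
    have h := congrArg (· ^ 2) hv
    simpa [Real.sq_sqrt (Finset.sum_nonneg fun i _ => sq_nonneg _)] using h
  have hBv2 : ∑ i, (B.mulVec v i) ^ 2 ≤ δ ^ 2 := by
    have hnn : 0 ≤ ∑ i, (B.mulVec v i) ^ 2 :=
      Finset.sum_nonneg fun i _ => sq_nonneg _
    calc ∑ i, (B.mulVec v i) ^ 2
        = Real.sqrt (∑ i, (B.mulVec v i) ^ 2) ^ 2 := (Real.sq_sqrt hnn).symm
      _ ≤ δ ^ 2 := by
          apply pow_le_pow_left₀ (Real.sqrt_nonneg _) hBv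
  set q : ℝ := ∑ i, ∑ j, A i j * (v i * v j) with hq
  -- Frobenius norm of B
  have hBF : ∑ i, ∑ j, B i j ^ 2 = 1 - 2 * lam * q + lam ^ 2 := by
    have key : ∀ i j, B i j ^ 2 =
        A i j ^ 2 - 2 * lam * (A i j * (v i * v j)) + lam ^ 2 * (v i ^ 2 * v j ^ 2) := by
      intro i j
      simp [hB, vecMulVec, Matrix.sub_apply, Matrix.smul_apply]
      ring
    have hvv : ∑ i, ∑ j, v i ^ 2 * v j ^ 2 = 1 := by
      rw [← Finset.sum_mul_sum]
      rw [hv2]; ring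
    calc ∑ i, ∑ j, B i j ^ 2
        = ∑ i, ∑ j, (A i j ^ 2 - 2 * lam * (A i j * (v i * v j))
            + lam ^ 2 * (v i ^ 2 * v j ^ 2)) := by
          exact Finset.sum_congr rfl fun i _ => Finset.sum_congr rfl fun j _ => key i j
      _ = (∑ i, ∑ j, A i j ^ 2) - 2 * lam * (∑ i, ∑ j, A i j * (v i * v j))
            + lam ^ 2 * (∑ i, ∑ j, v i ^ 2 * v j ^ 2) := by
          simp [Finset.sum_add_distrib, Finset.sum_sub_distrib, Finset.mul_sum]
      _ = 1 - 2 * lam * q + lam ^ 2 := by rw [hA2, hvv, ← hq]; ring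
  -- v ⬝ Bv = q - lam
  have hvBv : ∑ i, v i * B.mulVec v i = q - lam := by
    have key : ∀ i, v i * B.mulVec v i =
        ∑ j, (A i j * (v i * v j) - lam * (v i ^ 2 * v j ^ 2)) := by
      intro i
      simp only [hB, mulVec, dotProduct, Matrix.sub_apply, Matrix.smul_apply, vecMulVec_apply,
        smul_eq_mul, Finset.mul_sum]
      exact Finset.sum_congr rfl fun j _ => by ring
    have h2 : ∑ i, ∑ j, lam * (v i ^ 2 * v j ^ 2) = lam := by
      have : ∑ i, ∑ j, lam * (v i ^ 2 * v j ^ 2)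
          = lam * ∑ i, ∑ j, v i ^ 2 * v j ^ 2 := by
        simp [Finset.mul_sum]
      rw [this, ← Finset.sum_mul_sum, hv2]; ring
    calc ∑ i, v i * B.mulVec v i
        = ∑ i, ∑ j, (A i j * (v i * v j) - lam * (v i ^ 2 * v j ^ 2)) :=
          Finset.sum_congr rfl fun i _ => key i
      _ = (∑ i, ∑ j, A i j * (v i * v j)) - ∑ i, ∑ j, lam * (v i ^ 2 * v j ^ 2) := by
          simp [Finset.sum_sub_distrib]
      _ = q - lam := by rw [h2, ← hq]
  -- Cauchy-Schwarz
  have hCS : (q - lam) ^ 2 ≤ δ ^ 2 := by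
    calc (q - lam) ^ 2 = (∑ i, v i * B.mulVec v i) ^ 2 := by rw [hvBv]
      _ ≤ (∑ i, v i ^ 2) * ∑ i, (B.mulVec v i) ^ 2 :=
          Finset.sum_mul_sq_le_sq_mul_sq _ _ _
      _ ≤ δ ^ 2 := by
          rw [hv2, one_mul]; exact hBv2
  have hlam2 : lam ^ 2 ≥ 9 * ε ^ 2 := by
    nlinarith [sq_abs lam, abs_nonneg lam]
  rw [hBF]
  nlinarith [sq_nonneg (lam + 3 * (q - lam)), hCS, hlam2, sq_nonneg δ]
end

section
/- Let p : ℝⁿ → ℝ be a degree-2 polynomial, p(x) = Σ_{1≤i≤j≤n} a_{ij} x_i x_j + Σ_{1≤i≤n} b_i x_i + C, and define SS(p) = Σ_{1≤i≤j≤n} a_{ij}² + Σ_{1≤i≤n} b_i². Then, with respect to x ∼ N(0,1)ⁿ, one has SS(p) ≤ Var(p) ≤ 2·SS(p). -/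
open MeasureTheory ProbabilityTheory Finset

noncomputable section
namespace Stmt2
open Real

/-! ### Single-variable Gaussian moments -/

lemma integ_pow_exp (k : ℕ) : Integrable (fun x : ℝ => x ^ k * Real.exp (-(1/2) * x ^ 2)) := by
  have := integrable_rpow_mul_exp_neg_mul_sq (b := 1/2) (by norm_num) (s := (k : ℝ))
    (by exact_mod_cast neg_one_lt_zero.trans_le (Nat.cast_nonneg k))
  simpa [Real.rpow_natCast] using this

def I (k : ℕ) : ℝ := ∫ x : ℝ, x ^ k * Real.exp (-(1/2) * x ^ 2)

lemma I_zero : I 0 = Real.sqrt (2 * π) := by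
  have := integral_gaussian (1/2)
  simp only [I, pow_zero, one_mul]
  rw [this, show π / (1/2 : ℝ) = 2 * π by ring]

lemma I_one : I 1 = 0 := by
  have hd : ∀ x : ℝ, HasDerivAt (fun x : ℝ => -Real.exp (-(1/2) * x ^ 2))
      (x ^ 1 * Real.exp (-(1/2) * x ^ 2)) x := by
    intro x
    have h1 : HasDerivAt (fun x : ℝ => -(1/2) * x ^ 2) (-(1/2) * (2 * x)) x := by
      simpa using ((hasDerivAt_pow 2 x).const_mul (-(1/2 : ℝ)))
    have := (h1.exp).fun_neg
    refine this.congr_deriv ?_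
    ring
  have := integral_eq_zero_of_hasDerivAt_of_integrable hd (integ_pow_exp 1)
    ((integ_pow_exp 0).neg.congr (by filter_upwards with x; simp))
  simpa [I] using this

lemma I_rec (k : ℕ) : I (k + 2) = (k + 1) * I k := by
  have hd : ∀ x : ℝ, HasDerivAt (fun x : ℝ => x ^ (k+1) * Real.exp (-(1/2) * x ^ 2))
      (((k+1 : ℝ) * x ^ k * Real.exp (-(1/2) * x ^ 2)) - x ^ (k+2) * Real.exp (-(1/2) * x ^ 2)) x := by
    intro x
    have h1 : HasDerivAt (fun x : ℝ => -(1/2) * x ^ 2) (-(1/2) * (2 * x)) x := by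
      simpa using ((hasDerivAt_pow 2 x).const_mul (-(1/2 : ℝ)))
    have h2 := (hasDerivAt_pow (k+1) x).fun_mul h1.exp
    refine h2.congr_deriv ?_
    push_cast
    ring
  have hik : Integrable (fun x : ℝ => (k+1 : ℝ) * x ^ k * Real.exp (-(1/2) * x ^ 2)) := by
    have := (integ_pow_exp k).const_mul ((k : ℝ) + 1)
    exact this.congr (by filter_upwards with x; ring)
  have hint : Integrable (fun x : ℝ => ((k+1 : ℝ) * x ^ k * Real.exp (-(1/2) * x ^ 2)) - x ^ (k+2) * Real.exp (-(1/2) * x ^ 2)) := hik.sub (integ_pow_exp (k+2))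
  have h0 := integral_eq_zero_of_hasDerivAt_of_integrable hd hint (integ_pow_exp (k+1))
  have h3 : ∫ x : ℝ, (((k+1 : ℝ) * x ^ k * Real.exp (-(1/2) * x ^ 2)) - x ^ (k+2) * Real.exp (-(1/2) * x ^ 2)) = (k+1 : ℝ) * I k - I (k+2) := by
    rw [integral_sub hik (integ_pow_exp (k+2))]
    unfold I
    rw [← integral_const_mul]
    congr 1
    congr 1 with x
    ring
  rw [h0] at h3
  linarith [h3]

abbrev γ : Measure ℝ := gaussianReal 0 1

lemma pdf_meas : Measurable (fun x => (gaussianPDFReal 0 1 x).toNNReal) :=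
  (measurable_gaussianPDFReal 0 1).real_toNNReal

lemma γ_eq : γ = (volume : Measure ℝ).withDensity (fun x => ((gaussianPDFReal 0 1 x).toNNReal : ENNReal)) := by
  rw [show γ = gaussianReal 0 1 from rfl, gaussianReal_of_var_ne_zero 0 one_ne_zero]
  rfl

lemma integral_γ (g : ℝ → ℝ) :
    ∫ x, g x ∂γ = ∫ x, gaussianPDFReal 0 1 x * g x := by
  rw [γ_eq, integral_withDensity_eq_integral_smul pdf_meas g]
  congr 1 with x
  simp [NNReal.smul_def, Real.coe_toNNReal _ (gaussianPDFReal_nonneg 0 1 x)]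

lemma integrable_γ_iff (g : ℝ → ℝ) :
    Integrable g γ ↔ Integrable (fun x => gaussianPDFReal 0 1 x * g x) := by
  rw [γ_eq, integrable_withDensity_iff_integrable_smul pdf_meas]
  constructor <;> intro h <;>
    refine h.congr (by filter_upwards with x; simp [NNReal.smul_def, Real.coe_toNNReal _ (gaussianPDFReal_nonneg 0 1 x)])

lemma pdf01 (x : ℝ) : gaussianPDFReal 0 1 x = (Real.sqrt (2 * π))⁻¹ * Real.exp (-(1/2) * x ^ 2) := by
  unfold gaussianPDFReal
  norm_num
  exact Or.inl (by ring)

lemma sqrt2pi_pos : 0 < Real.sqrt (2 * π) := Real.sqrt_pos.2 (by positivity)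

lemma integrable_pow_γ (k : ℕ) : Integrable (fun x : ℝ => x ^ k) γ := by
  rw [integrable_γ_iff]
  refine ((integ_pow_exp k).const_mul ((Real.sqrt (2 * π))⁻¹)).congr ?_
  filter_upwards with x
  rw [pdf01]
  ring

def M (k : ℕ) : ℝ := ∫ x, x ^ k ∂γ

lemma M_eq (k : ℕ) : M k = (Real.sqrt (2 * π))⁻¹ * I k := by
  rw [M, integral_γ, I, ← integral_const_mul]
  congr 1 with x
  rw [pdf01]
  ring

lemma M_zero : M 0 = 1 := by
  rw [M_eq, I_zero, inv_mul_cancel₀ sqrt2pi_pos.ne']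
lemma M_one : M 1 = 0 := by rw [M_eq, I_one, mul_zero]
lemma M_two : M 2 = 1 := by
  have h := I_rec 0
  rw [show (0:ℕ)+2 = 2 from rfl] at h
  rw [M_eq, h, I_zero]
  push_cast
  rw [zero_add, one_mul, inv_mul_cancel₀ sqrt2pi_pos.ne']
lemma M_three : M 3 = 0 := by
  have h := I_rec 1
  rw [show (1:ℕ)+2 = 3 from rfl] at h
  rw [M_eq, h, I_one, mul_zero, mul_zero]
lemma M_four : M 4 = 3 := by
  have h2 := I_rec 2
  have h0 := I_rec 0
  rw [show (0:ℕ)+2 = 2 from rfl] at h0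
  rw [show (2:ℕ)+2 = 4 from rfl] at h2
  rw [M_eq, h2, h0, I_zero]
  have := sqrt2pi_pos
  push_cast
  field_simp
  ring

lemma integral_one_γ : ∫ x, (1:ℝ) ∂γ = 1 := by
  have := M_zero
  rw [M] at this
  simpa using this

/-! ### products over pi measures -/

theorem integrable_pi_prod {n : ℕ} (ν : Fin n → Measure ℝ) [∀ i, SigmaFinite (ν i)]
    {f : Fin n → ℝ → ℝ} (hf : ∀ i, Integrable (f i) (ν i)) :
    Integrable (fun x : Fin n → ℝ => ∏ i, f i (x i)) (Measure.pi ν) := by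
  induction n with
  | zero => simp only [Finset.univ_eq_empty, Finset.prod_empty,
      integrable_const_iff, one_ne_zero, Measure.pi_empty_univ, ENNReal.one_lt_top, or_true]; exact Or.inr ⟨by simp [Measure.pi_empty_univ]⟩
  | succ n n_ih =>
      have := ((MeasureTheory.measurePreserving_piFinSuccAbove ν 0).symm)
      rw [← this.integrable_comp_emb (MeasurableEquiv.measurableEmbedding _)]
      simp_rw [MeasurableEquiv.piFinSuccAbove_symm_apply, Fin.insertNthEquiv,
        Fin.prod_univ_succ, Fin.insertNth_zero]
      simp only [Fin.zero_succAbove, cast_eq, Function.comp_def, Fin.cons_zero, Fin.cons_succ]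
      have : Integrable (fun (x : Fin n → ℝ) ↦ ∏ j, f (Fin.succ j) (x j))
          (Measure.pi fun j => ν (Fin.succ j)) := n_ih _ (fun i ↦ hf _)
      exact Integrable.mul_prod (hf 0) this

theorem integral_pi_prod {n : ℕ} (ν : Fin n → Measure ℝ) [∀ i, SigmaFinite (ν i)]
    (f : Fin n → ℝ → ℝ) :
    ∫ x : Fin n → ℝ, ∏ i, f i (x i) ∂(Measure.pi ν) = ∏ i, ∫ x, f i x ∂(ν i) := by
  induction n with
  | zero =>
      simp only [Finset.univ_eq_empty, Finset.prod_empty, integral_const,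
        Measure.pi_empty_univ, measureReal_def, ENNReal.toReal_one, smul_eq_mul, mul_one, pow_zero, one_smul]
  | succ n n_ih =>
      calc
        _ = ∫ x : ℝ × (Fin n → ℝ),
            f 0 x.1 * ∏ i : Fin n, f (Fin.succ i) (x.2 i) ∂((ν 0).prod (Measure.pi fun j => ν (Fin.succ j))) := by
          rw [← ((MeasureTheory.measurePreserving_piFinSuccAbove ν 0).symm).integral_comp']
          simp_rw [MeasurableEquiv.piFinSuccAbove_symm_apply, Fin.insertNthEquiv,
            Fin.prod_univ_succ, Fin.insertNth_zero, Equiv.coe_fn_mk, Fin.cons_succ,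
            Fin.zero_succAbove, cast_eq, Fin.cons_zero]
        _ = (∫ x, f 0 x ∂(ν 0)) * ∏ i : Fin n, ∫ (x : ℝ), f (Fin.succ i) x ∂(ν (Fin.succ i)) := by
          rw [← n_ih, ← integral_prod_mul]
        _ = ∏ i, ∫ x, f i x ∂(ν i) := by rw [Fin.prod_univ_succ]

/-! ### the basis functions -/

def g (c : ℕ) : ℝ → ℝ := fun x => if c = 0 then 1 else if c = 1 then x else x ^ 2 - 1

lemma g_int (c : ℕ) : Integrable (g c) γ := by
  unfold g
  split_ifs
  · exact integrable_const 1
  · simpa using integrable_pow_γ 1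
  · exact (integrable_pow_γ 2).sub (integrable_const 1)

lemma g_mul_int (c c' : ℕ) : Integrable (fun x => g c x * g c' x) γ := by
  have h1 : Integrable (fun x : ℝ => x) γ := by simpa using integrable_pow_γ 1
  have h42 : Integrable (fun x : ℝ => x ^ 4 - 2 * x ^ 2) γ :=
    (integrable_pow_γ 4).sub ((integrable_pow_γ 2).const_mul 2)
  unfold g
  split_ifs
  · exact (integrable_const 1).congr (by filter_upwards with x; (try simp only [Pi.sub_apply, Pi.add_apply]); ring)
  · exact h1.congr (by filter_upwards with x; (try simp only [Pi.sub_apply, Pi.add_apply]); ring)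
  · exact ((integrable_pow_γ 2).sub (integrable_const 1)).congr (by filter_upwards with x; (try simp only [Pi.sub_apply, Pi.add_apply]); ring)
  · exact h1.congr (by filter_upwards with x; (try simp only [Pi.sub_apply, Pi.add_apply]); ring)
  · exact (integrable_pow_γ 2).congr (by filter_upwards with x; (try simp only [Pi.sub_apply, Pi.add_apply]); ring)
  · exact ((integrable_pow_γ 3).sub (integrable_pow_γ 1)).congr (by filter_upwards with x; (try simp only [Pi.sub_apply, Pi.add_apply]); ring)
  · exact ((integrable_pow_γ 2).sub (integrable_const 1)).congr (by filter_upwards with x; (try simp only [Pi.sub_apply, Pi.add_apply]); ring)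
  · exact ((integrable_pow_γ 3).sub (integrable_pow_γ 1)).congr (by filter_upwards with x; (try simp only [Pi.sub_apply, Pi.add_apply]); ring)
  · exact (h42.add (integrable_const 1)).congr (by filter_upwards with x; (try simp only [Pi.sub_apply, Pi.add_apply]); ring)

def m2 (c c' : ℕ) : ℝ := ∫ x, g c x * g c' x ∂γ

def m1 (c : ℕ) : ℝ := ∫ x, g c x ∂γ

lemma m1_eval (c : ℕ) : m1 c = if c = 0 then 1 else 0 := by
  rcases c with _ | _ | c
  · rw [m1]
    have : (fun x : ℝ => g 0 x) = fun _ : ℝ => (1:ℝ) := by funext x; simp [g]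
    rw [this, integral_one_γ]
    simp
  · rw [m1]
    have : (fun x : ℝ => g 1 x) = fun x : ℝ => x ^ 1 := by funext x; simp [g]
    have hM1 := M_one
    rw [M] at hM1
    rw [this, hM1]
    norm_num
  · rw [m1]
    have : (fun x : ℝ => g (c+2) x) = fun x : ℝ => x ^ 2 - 1 := by funext x; simp [g]
    rw [this, integral_sub (integrable_pow_γ 2) (integrable_const 1), integral_one_γ]
    have h2 := M_two
    rw [M] at h2
    simp [h2]

lemma m2_eval (c c' : ℕ) (hc : c ≤ 2) (hc' : c' ≤ 2) :
    m2 c c' = if c = c' then (if c = 2 then 2 else 1) else 0 := by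
  have hM0 := M_zero; have hM1 := M_one; have hM2 := M_two; have hM3 := M_three
  have hM4 := M_four
  rw [M] at hM0 hM1 hM2 hM3 hM4
  interval_cases c <;> interval_cases c' <;> rw [m2] <;> norm_num
  · -- 0 0
    have : (fun x : ℝ => g 0 x * g 0 x) = fun _ : ℝ => (1:ℝ) := by funext x; simp [g]
    rw [this, integral_one_γ]
  · -- 0 1
    have : (fun x : ℝ => g 0 x * g 1 x) = fun x : ℝ => x ^ 1 := by funext x; simp [g]
    rw [this, hM1]
  · -- 0 2
    have : (fun x : ℝ => g 0 x * g 2 x) = fun x : ℝ => x ^ 2 - 1 := by funext x; simp [g]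
    rw [this, integral_sub (integrable_pow_γ 2) (integrable_const 1), hM2, integral_one_γ]
    ring
  · -- 1 0
    have : (fun x : ℝ => g 1 x * g 0 x) = fun x : ℝ => x ^ 1 := by funext x; simp [g]
    rw [this, hM1]
  · -- 1 1
    have : (fun x : ℝ => g 1 x * g 1 x) = fun x : ℝ => x ^ 2 := by funext x; simp [g]; ring
    rw [this, hM2]
  · -- 1 2
    have : (fun x : ℝ => g 1 x * g 2 x) = fun x : ℝ => x ^ 3 - x ^ 1 := by funext x; simp [g]; ring
    rw [this, integral_sub (integrable_pow_γ 3) (integrable_pow_γ 1), hM3, hM1]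
    ring
  · -- 2 0
    have : (fun x : ℝ => g 2 x * g 0 x) = fun x : ℝ => x ^ 2 - 1 := by funext x; simp [g]
    rw [this, integral_sub (integrable_pow_γ 2) (integrable_const 1), hM2, integral_one_γ]
    ring
  · -- 2 1
    have : (fun x : ℝ => g 2 x * g 1 x) = fun x : ℝ => x ^ 3 - x ^ 1 := by funext x; simp [g]; ring
    rw [this, integral_sub (integrable_pow_γ 3) (integrable_pow_γ 1), hM3, hM1]
    ring
  · -- 2 2
    have : (fun x : ℝ => g 2 x * g 2 x) = fun x : ℝ => (x ^ 4 - 2 * x ^ 2) + 1 := by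
      funext x; simp [g]; ring
    have h42 : Integrable (fun x : ℝ => x ^ 4 - 2 * x ^ 2) γ :=
      (integrable_pow_γ 4).sub ((integrable_pow_γ 2).const_mul 2)
    rw [this, integral_add h42 (integrable_const 1),
      integral_sub (integrable_pow_γ 4) ((integrable_pow_γ 2).const_mul 2), hM4, integral_one_γ,
      integral_const_mul, hM2]
    ring


variable {n : ℕ}

abbrev T (n : ℕ) := (Fin n × Fin n) ⊕ (Fin n ⊕ Fin n)

def code : T n → Fin n → ℕ
  | .inl (i, j) => fun k => if k = i ∨ k = j then 1 else 0
  | .inr (.inl i) => fun k => if k = i then 2 else 0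
  | .inr (.inr i) => fun k => if k = i then 1 else 0

lemma code_le (t : T n) (k : Fin n) : code t k ≤ 2 := by
  rcases t with ⟨i, j⟩ | i | i <;> simp only [code] <;> split_ifs <;> omega

def coeff (a : Fin n → Fin n → ℝ) (b : Fin n → ℝ) : T n → ℝ
  | .inl (i, j) => a i j
  | .inr (.inl i) => a i i
  | .inr (.inr i) => b i

def Φ (t : T n) (x : Fin n → ℝ) : ℝ := ∏ k, g (code t k) (x k)

def P (n : ℕ) : Finset (Fin n × Fin n) := Finset.univ.filter fun p => p.1 < p.2

def S (n : ℕ) : Finset (T n) := (P n).disjSum (Finset.univ.disjSum Finset.univ)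

lemma Φ_inl {i j : Fin n} (hij : i ≠ j) (x : Fin n → ℝ) :
    Φ (.inl (i, j)) x = x i * x j := by
  have h : ∀ k, g (code (.inl (i, j) : T n) k) (x k)
      = (if k = i then x k else 1) * (if k = j then x k else 1) := by
    intro k
    simp only [code]
    by_cases hki : k = i
    · subst hki
      rw [if_pos (Or.inl rfl), if_pos rfl, if_neg hij]
      simp [g]
    · by_cases hkj : k = j
      · subst hkj
        rw [if_pos (Or.inr rfl), if_neg hki, if_pos rfl]
        simp [g]
      · rw [if_neg (by tauto), if_neg hki, if_neg hkj]
        simp [g]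
  rw [Φ]
  simp only [h]
  rw [Finset.prod_mul_distrib, Fintype.prod_ite_eq' i (fun k => x k),
    Fintype.prod_ite_eq' j (fun k => x k)]

lemma Φ_inr_inl (i : Fin n) (x : Fin n → ℝ) :
    Φ (.inr (.inl i)) x = x i ^ 2 - 1 := by
  have h : ∀ k, g (code (.inr (.inl i) : T n) k) (x k) = if k = i then x k ^ 2 - 1 else 1 := by
    intro k
    by_cases hki : k = i <;> simp [code, g, hki]
  rw [Φ]
  simp only [h]
  exact Fintype.prod_ite_eq' i (fun k => x k ^ 2 - 1)

lemma Φ_inr_inr (i : Fin n) (x : Fin n → ℝ) :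
    Φ (.inr (.inr i)) x = x i := by
  have h : ∀ k, g (code (.inr (.inr i) : T n) k) (x k) = if k = i then x k else 1 := by
    intro k
    by_cases hki : k = i <;> simp [code, g, hki]
  rw [Φ]
  simp only [h]
  exact Fintype.prod_ite_eq' i (fun k => x k)

lemma mem_S_inl {p : Fin n × Fin n} : (Sum.inl p : T n) ∈ S n ↔ p.1 < p.2 := by
  rw [S, Finset.inl_mem_disjSum, P, Finset.mem_filter]
  simp

lemma code_ne {s t : T n} (hs : s ∈ S n) (ht : t ∈ S n) (hst : s ≠ t) :
    ∃ k, code s k ≠ code t k := by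
  rcases s with ⟨i, j⟩ | i | i <;> rcases t with ⟨i', j'⟩ | i' | i'
  · -- inl inl
    have hij : i < j := mem_S_inl.1 hs
    have hij' : i' < j' := mem_S_inl.1 ht
    by_contra h
    push_neg at h
    have hi : i = i' ∨ i = j' := by
      have hh := h i
      simp only [code, true_or, or_true, if_true] at hh
      by_contra hc
      rw [if_neg hc] at hh
      exact one_ne_zero hh
    have hj : j = i' ∨ j = j' := by
      have hh := h j
      simp only [code, true_or, or_true, if_true] at hh
      by_contra hc
      rw [if_neg hc] at hh
      exact one_ne_zero hh
    have hiv : (i:ℕ) = i' ∨ (i:ℕ) = j' := by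
      rcases hi with h1 | h1
      exacts [Or.inl (congrArg Fin.val h1), Or.inr (congrArg Fin.val h1)]
    have hjv : (j:ℕ) = i' ∨ (j:ℕ) = j' := by
      rcases hj with h1 | h1
      exacts [Or.inl (congrArg Fin.val h1), Or.inr (congrArg Fin.val h1)]
    have hijv : (i:ℕ) < j := hij
    have hijv' : (i':ℕ) < j' := hij'
    have heq : (i:ℕ) = i' ∧ (j:ℕ) = j' := by omega
    exact hst (by rw [Fin.ext heq.1, Fin.ext heq.2])
  · -- inl vs inr inl
    refine ⟨i', ?_⟩
    simp only [code, true_or, or_true, if_true]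
    split_ifs <;> omega
  · -- inl vs inr inr
    have hij : i < j := mem_S_inl.1 hs
    have hijv : (i:ℕ) < j := hij
    by_cases hi : i' = i
    · refine ⟨j, ?_⟩
      simp only [code, true_or, or_true, if_true]
      rw [if_neg (fun hh : j = i' => by
        have h1 : (j:ℕ) = i' := congrArg Fin.val hh
        have h2 : (i':ℕ) = i := congrArg Fin.val hi
        omega)]
      omega
    · refine ⟨i, ?_⟩
      simp only [code, true_or, or_true, if_true]
      rw [if_neg (fun hh : i = i' => hi hh.symm)]
      omega
  · -- inr inl vs inl
    refine ⟨i, ?_⟩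
    simp only [code, true_or, or_true, if_true]
    split_ifs <;> omega
  · -- inr inl vs inr inl
    have hii' : i ≠ i' := fun h => hst (by rw [h])
    refine ⟨i, ?_⟩
    simp only [code, true_or, or_true, if_true]
    rw [if_neg hii']
    omega
  · -- inr inl vs inr inr
    refine ⟨i, ?_⟩
    simp only [code, true_or, or_true, if_true]
    split_ifs <;> omega
  · -- inr inr vs inl
    have hij : i' < j' := mem_S_inl.1 ht
    have hijv : (i':ℕ) < j' := hij
    by_cases hi : i = i'
    · refine ⟨j', ?_⟩
      simp only [code, true_or, or_true, if_true]
      rw [if_neg (fun hh : j' = i => by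
        have h1 : (j':ℕ) = i := congrArg Fin.val hh
        have h2 : (i:ℕ) = i' := congrArg Fin.val hi
        omega)]
      omega
    · by_cases hj : i = j'
      · refine ⟨i', ?_⟩
        simp only [code, true_or, or_true, if_true]
        rw [if_neg (fun hh : i' = i => by
          have h1 : (i':ℕ) = i := congrArg Fin.val hh
          have h2 : (i:ℕ) = j' := congrArg Fin.val hj
          omega)]
        omega
      · refine ⟨i, ?_⟩
        simp only [code, true_or, or_true, if_true]
        rw [if_neg (fun hh : i = i' ∨ i = j' => by
          rcases hh with hh | hh
          exacts [hi hh, hj hh])]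
        omega
  · -- inr inr vs inr inl
    refine ⟨i', ?_⟩
    simp only [code, true_or, or_true, if_true]
    split_ifs <;> omega
  · -- inr inr vs inr inr
    have hii' : i ≠ i' := fun h => hst (by rw [h])
    refine ⟨i, ?_⟩
    simp only [code, true_or, or_true, if_true]
    rw [if_neg hii']
    omega

lemma W_inl {i j : Fin n} : ∏ k, m2 (code (.inl (i,j) : T n) k) (code (.inl (i,j) : T n) k) = 1 :=
  Finset.prod_eq_one fun k _ => by
    simp only [code]
    split_ifs <;> rw [m2_eval _ _ (by omega) (by omega)] <;> norm_num

lemma W_inr_inl (i : Fin n) :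
    ∏ k, m2 (code (.inr (.inl i) : T n) k) (code (.inr (.inl i) : T n) k) = 2 := by
  have h : ∀ k, m2 (code (.inr (.inl i) : T n) k) (code (.inr (.inl i) : T n) k)
      = if k = i then (2:ℝ) else 1 := by
    intro k
    simp only [code]
    split_ifs <;> rw [m2_eval _ _ (by omega) (by omega)] <;> norm_num
  simp only [h]
  exact Fintype.prod_ite_eq' i (fun _ => (2:ℝ))

lemma W_inr_inr (i : Fin n) :
    ∏ k, m2 (code (.inr (.inr i) : T n) k) (code (.inr (.inr i) : T n) k) = 1 :=
  Finset.prod_eq_one fun k _ => by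
    simp only [code]
    split_ifs <;> rw [m2_eval _ _ (by omega) (by omega)] <;> norm_num


lemma sum_P (f : Fin n → Fin n → ℝ) :
    ∑ p ∈ P n, f p.1 p.2 = ∑ i, ∑ j ∈ Finset.Ioi i, f i j := by
  rw [P, Finset.sum_filter, ← Finset.univ_product_univ, Finset.sum_product]
  refine Finset.sum_congr rfl fun i _ => ?_
  rw [← Finset.sum_filter]
  congr 1
  ext j
  simp

abbrev μpi (n : ℕ) : Measure (Fin n → ℝ) := Measure.pi fun _ => γ

lemma Φ_integrable (t : T n) : Integrable (Φ t) (μpi n) :=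
  integrable_pi_prod _ fun _ => g_int _

lemma Φ_mul_eq (s t : T n) : (fun x : Fin n → ℝ => Φ s x * Φ t x)
    = fun x => ∏ k, (g (code s k) (x k) * g (code t k) (x k)) := by
  funext x
  rw [Φ, Φ, ← Finset.prod_mul_distrib]

lemma Φ_mul_integrable (s t : T n) : Integrable (fun x => Φ s x * Φ t x) (μpi n) := by
  rw [Φ_mul_eq]
  exact integrable_pi_prod _ fun k => g_mul_int _ _

lemma integral_Φ_mul (s t : T n) :
    ∫ x, Φ s x * Φ t x ∂(μpi n) = ∏ k, m2 (code s k) (code t k) := by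
  rw [Φ_mul_eq, integral_pi_prod (fun _ => γ) (fun k => fun y => g (code s k) y * g (code t k) y)]
  rfl

lemma integral_Φ (t : T n) : ∫ x, Φ t x ∂(μpi n) = 0 := by
  rw [show (Φ t : (Fin n → ℝ) → ℝ) = fun x => ∏ k, g (code t k) (x k) from rfl,
    integral_pi_prod]
  have hm1 : ∀ k : Fin n, (∫ x, g (code t k) x ∂γ) = m1 (code t k) := fun k => rfl
  rcases t with ⟨i, j⟩ | i | i
  · refine Finset.prod_eq_zero (Finset.mem_univ i) ?_
    rw [hm1 i, show code (.inl (i,j) : T n) i = 1 by simp [code], m1_eval]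
    norm_num
  · refine Finset.prod_eq_zero (Finset.mem_univ i) ?_
    rw [hm1 i, show code (.inr (.inl i) : T n) i = 2 by simp [code], m1_eval]
    norm_num
  · refine Finset.prod_eq_zero (Finset.mem_univ i) ?_
    rw [hm1 i, show code (.inr (.inr i) : T n) i = 1 by simp [code], m1_eval]
    norm_num

lemma variance_fun_add_const {Ω : Type*} [MeasurableSpace Ω] {μ : Measure Ω}
    [IsProbabilityMeasure μ] {X : Ω → ℝ} (hX : Integrable X μ) (m : ℝ) :
    variance (fun ω => X ω + m) μ = variance X μ := by
  have hm : ∫ ω, (X ω + m) ∂μ = (∫ ω, X ω ∂μ) + m := by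
    rw [integral_add hX (integrable_const m), integral_const]
    simp
  rw [variance, variance, evariance, evariance]
  congr 1
  refine lintegral_congr fun ω => ?_
  congr 2
  rw [show (∫ a, (fun ω => X ω + m) a ∂μ) = (∫ ω, X ω ∂μ) + m from hm]
  ring

theorem variance_poly (a : Fin n → Fin n → ℝ) (b : Fin n → ℝ) (C : ℝ) :
    variance (fun x : Fin n → ℝ =>
        (∑ i, ∑ j ∈ Finset.Ici i, a i j * x i * x j) + (∑ i, b i * x i) + C)
      (Measure.pi fun _ => gaussianReal 0 1)
      = (∑ p ∈ P n, (a p.1 p.2)^2) + 2 * ∑ i, (a i i)^2 + ∑ i, (b i)^2 := by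
  set c : T n → ℝ := coeff a b with hc
  set q : (Fin n → ℝ) → ℝ := fun x => ∑ t ∈ S n, c t * Φ t x with hqdef
  have hqint : Integrable q (μpi n) :=
    integrable_finset_sum _ fun t _ => (Φ_integrable t).const_mul _
  have hsq : (fun x => q x ^ 2)
      = fun x => ∑ t ∈ S n, ∑ s ∈ S n, (c t * c s) * (Φ t x * Φ s x) := by
    funext x
    rw [hqdef, sq, Finset.sum_mul_sum]
    exact Finset.sum_congr rfl fun t _ => Finset.sum_congr rfl fun s _ => by ring
  have hq2 : Integrable (fun x => q x ^ 2) (μpi n) := by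
    rw [hsq]
    exact integrable_finset_sum _ fun t _ =>
      integrable_finset_sum _ fun s _ => (Φ_mul_integrable t s).const_mul _
  have hMem : MemLp q 2 (μpi n) := (memLp_two_iff_integrable_sq hqint.aestronglyMeasurable).2 hq2
  have hq0 : ∫ x, q x ∂(μpi n) = 0 := by
    rw [hqdef, integral_finset_sum _ fun t _ => (Φ_integrable t).const_mul _]
    refine Finset.sum_eq_zero fun t ht => ?_
    rw [integral_const_mul, integral_Φ t, mul_zero]
  have hvar : variance q (μpi n) = ∫ x, q x ^ 2 ∂(μpi n) :=
    variance_of_integral_eq_zero hMem.aestronglyMeasurable.aemeasurable hq0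
  have hsum : ∫ x, q x ^ 2 ∂(μpi n)
      = ∑ t ∈ S n, (c t)^2 * ∏ k, m2 (code t k) (code t k) := by
    rw [hsq, integral_finset_sum _ (fun t _ =>
      integrable_finset_sum _ fun s _ => (Φ_mul_integrable t s).const_mul _)]
    refine Finset.sum_congr rfl fun t ht => ?_
    rw [integral_finset_sum _ (fun s _ => (Φ_mul_integrable t s).const_mul _)]
    rw [Finset.sum_eq_single t]
    · rw [integral_const_mul, integral_Φ_mul, ← sq]
    · intro s hsS hst
      obtain ⟨k, hk⟩ := code_ne ht hsS (Ne.symm hst)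
      rw [integral_const_mul, integral_Φ_mul]
      exact mul_eq_zero_of_right _ (Finset.prod_eq_zero (Finset.mem_univ k)
        (by rw [m2_eval _ _ (code_le _ _) (code_le _ _), if_neg hk]))
    · intro h
      exact absurd ht h
  have hW : ∑ t ∈ S n, (c t)^2 * ∏ k, m2 (code t k) (code t k)
      = (∑ p ∈ P n, (a p.1 p.2)^2) + (2 * ∑ i, (a i i)^2 + ∑ i, (b i)^2) := by
    rw [S, Finset.sum_disjSum, Finset.sum_disjSum]
    congr 1
    · refine Finset.sum_congr rfl fun p hp => ?_
      rcases p with ⟨i, j⟩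
      rw [W_inl]
      simp [hc, coeff]
    · congr 1
      · rw [Finset.mul_sum]
        refine Finset.sum_congr rfl fun i _ => ?_
        rw [W_inr_inl]
        simp [hc, coeff]
        ring
      · refine Finset.sum_congr rfl fun i _ => ?_
        rw [W_inr_inr]
        simp [hc, coeff]
  have hq_eval : (fun x : Fin n → ℝ =>
      (∑ i, ∑ j ∈ Finset.Ici i, a i j * x i * x j) + (∑ i, b i * x i) + C)
      = fun x => q x + ((∑ i, a i i) + C) := by
    funext x
    simp only [hqdef]
    rw [S, Finset.sum_disjSum, Finset.sum_disjSum]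
    have e1 : ∑ p ∈ P n, c (Sum.inl p) * Φ (Sum.inl p) x
        = ∑ i, ∑ j ∈ Finset.Ioi i, a i j * x i * x j := by
      rw [show ∑ p ∈ P n, c (Sum.inl p) * Φ (Sum.inl p) x
          = ∑ p ∈ P n, a p.1 p.2 * x p.1 * x p.2 from Finset.sum_congr rfl fun p hp => by
        rcases p with ⟨i, j⟩
        have hlt : i < j := mem_S_inl.1 (by rw [S, Finset.inl_mem_disjSum]; exact hp)
        rw [Φ_inl hlt.ne x]
        simp [hc, coeff]
        ring]
      exact sum_P fun i j => a i j * x i * x j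
    have e2 : ∑ i, c (Sum.inr (Sum.inl i)) * Φ (Sum.inr (Sum.inl i)) x
        = (∑ i, a i i * x i * x i) - ∑ i, a i i := by
      rw [← Finset.sum_sub_distrib]
      refine Finset.sum_congr rfl fun i _ => ?_
      rw [Φ_inr_inl i x]
      simp [hc, coeff]
      ring
    have e3 : ∑ i, c (Sum.inr (Sum.inr i)) * Φ (Sum.inr (Sum.inr i)) x
        = ∑ i, b i * x i := by
      refine Finset.sum_congr rfl fun i _ => ?_
      rw [Φ_inr_inr i x]
      simp [hc, coeff]
    have h1 : ∑ i, ∑ j ∈ Finset.Ici i, a i j * x i * x j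
        = (∑ i, a i i * x i * x i) + ∑ i, ∑ j ∈ Finset.Ioi i, a i j * x i * x j := by
      rw [← Finset.sum_add_distrib]
      refine Finset.sum_congr rfl fun i _ => ?_
      rw [← Finset.Ioi_insert, Finset.sum_insert Finset.notMem_Ioi_self]
    rw [e1, e2, e3, h1]
    ring
  rw [hq_eval, variance_fun_add_const hqint, hvar, hsum, hW]
  ring


end Stmt2
end

open Finset in
/-- For a degree-2 polynomial p(x) = Σ_{i≤j} a_{ij} x_i x_j + Σ_i b_i x_i + C
and SS(p) = Σ_{i≤j} a_{ij}² + Σ_i b_i², with respect to x ∼ N(0,1)ⁿ one has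
SS(p) ≤ Var(p) ≤ 2·SS(p). -/
theorem stmt_2 {n : ℕ} (a : Fin n → Fin n → ℝ) (b : Fin n → ℝ) (C : ℝ) :
    let μ : Measure (Fin n → ℝ) := Measure.pi fun _ => gaussianReal 0 1
    let p : (Fin n → ℝ) → ℝ := fun x =>
      (∑ i, ∑ j ∈ Finset.Ici i, a i j * x i * x j) + (∑ i, b i * x i) + C
    let SS : ℝ := (∑ i, ∑ j ∈ Finset.Ici i, (a i j) ^ 2) + ∑ i, (b i) ^ 2
    SS ≤ variance p μ ∧ variance p μ ≤ 2 * SS := by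
  intro μ p SS
  have hv : variance p μ
      = (∑ q ∈ Stmt2.P n, (a q.1 q.2)^2) + 2 * ∑ i, (a i i)^2 + ∑ i, (b i)^2 :=
    Stmt2.variance_poly a b C
  have hSS : SS = (∑ q ∈ Stmt2.P n, (a q.1 q.2)^2) + ∑ i, (a i i)^2 + ∑ i, (b i)^2 := by
    show (∑ i, ∑ j ∈ Finset.Ici i, (a i j)^2) + ∑ i, (b i)^2 = _
    have h1 : ∑ i, ∑ j ∈ Finset.Ici i, (a i j)^2
        = (∑ i, (a i i)^2) + ∑ i, ∑ j ∈ Finset.Ioi i, (a i j)^2 := by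
      rw [← Finset.sum_add_distrib]
      refine Finset.sum_congr rfl fun i _ => ?_
      rw [← Finset.Ioi_insert, Finset.sum_insert Finset.notMem_Ioi_self]
    rw [h1, ← Stmt2.sum_P fun i j => (a i j)^2]
    ring
  have hP : 0 ≤ ∑ q ∈ Stmt2.P n, (a q.1 q.2)^2 :=
    Finset.sum_nonneg fun _ _ => sq_nonneg _
  have hD : 0 ≤ ∑ i, (a i i)^2 := Finset.sum_nonneg fun _ _ => sq_nonneg _
  have hB : 0 ≤ ∑ i, (b i)^2 := Finset.sum_nonneg fun _ _ => sq_nonneg _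
  constructor
  · rw [hSS, hv]
    linarith
  · rw [hSS, hv]
    linarith
end

section
/- Let {c_i}_{i=1}^n and {d_i}_{i=1}^n be sequences of non-negative reals with {c_i} non-increasing, let τ ∈ (0,1), and suppose the τ-critical index of the pair is j (in particular j is finite and 0 ≤ j ≤ n−1). Then Σ_{i=j+1}^n (c_i + d_i) ≤ (1−τ)^j · Σ_{i=1}^n (c_i + d_i). -/
open Finset

/-- If {c_i}, {d_i} (i = 1..n) are non-negative with {c_i} non-increasing,
τ ∈ (0,1), and j is the τ-critical index of the pair (so j ≤ n−1, c_{j+1} ≤ τ·Σ_{ℓ>j}(c_ℓ+d_ℓ),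
and no smaller index satisfies this), then Σ_{i>j}(c_i+d_i) ≤ (1−τ)^j · Σ_{i=1}^n (c_i+d_i). -/
theorem stmt_6 (n : ℕ) (c d : ℕ → ℝ)
    (hc : ∀ i ∈ Finset.Icc 1 n, 0 ≤ c i) (hd : ∀ i ∈ Finset.Icc 1 n, 0 ≤ d i)
    (hmono : ∀ i j, 1 ≤ i → i ≤ j → j ≤ n → c j ≤ c i)
    (τ : ℝ) (hτ0 : 0 < τ) (hτ1 : τ < 1)
    (j : ℕ) (hjn : j ≤ n - 1)
    (hcrit : c (j + 1) ≤ τ * ∑ ℓ ∈ Finset.Icc (j + 1) n, (c ℓ + d ℓ))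
    (hmin : ∀ i < j, τ * ∑ ℓ ∈ Finset.Icc (i + 1) n, (c ℓ + d ℓ) < c (i + 1)) :
    ∑ ℓ ∈ Finset.Icc (j + 1) n, (c ℓ + d ℓ) ≤
      (1 - τ) ^ j * ∑ ℓ ∈ Finset.Icc 1 n, (c ℓ + d ℓ) := by
  have key : ∀ i, i ≤ j → ∑ ℓ ∈ Finset.Icc (i + 1) n, (c ℓ + d ℓ) ≤
      (1 - τ) ^ i * ∑ ℓ ∈ Finset.Icc 1 n, (c ℓ + d ℓ) := by
    intro i
    induction i with
    | zero => simp
    | succ i ih =>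
      intro h
      have hi' : i < j := Nat.lt_of_succ_le h
      have hin : i + 1 ≤ n := by omega
      have hsplit : Finset.Icc (i + 1) n = insert (i + 1) (Finset.Icc (i + 2) n) := by
        ext x; simp only [Finset.mem_Icc, Finset.mem_insert]; omega
      have hnot : (i + 1) ∉ Finset.Icc (i + 2) n := by simp
      have hsum : ∑ ℓ ∈ Finset.Icc (i + 1) n, (c ℓ + d ℓ) =
          (c (i + 1) + d (i + 1)) + ∑ ℓ ∈ Finset.Icc (i + 2) n, (c ℓ + d ℓ) := by
        rw [hsplit, Finset.sum_insert hnot]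
      have hdn : 0 ≤ d (i + 1) := hd _ (by simp [Finset.mem_Icc]; omega)
      have h1 := hmin i hi'
      have step : ∑ ℓ ∈ Finset.Icc (i + 2) n, (c ℓ + d ℓ) ≤
          (1 - τ) * ∑ ℓ ∈ Finset.Icc (i + 1) n, (c ℓ + d ℓ) := by
        nlinarith [hsum, h1, hdn]
      have ih' := ih (le_of_lt hi')
      calc ∑ ℓ ∈ Finset.Icc (i + 2) n, (c ℓ + d ℓ)
          ≤ (1 - τ) * ∑ ℓ ∈ Finset.Icc (i + 1) n, (c ℓ + d ℓ) := step
        _ ≤ (1 - τ) * ((1 - τ) ^ i * ∑ ℓ ∈ Finset.Icc 1 n, (c ℓ + d ℓ)) := by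
            apply mul_le_mul_of_nonneg_left ih' (by linarith)
        _ = (1 - τ) ^ (i + 1) * ∑ ℓ ∈ Finset.Icc 1 n, (c ℓ + d ℓ) := by ring
  exact key j le_rfl
end

section
/- There exist absolute constants C > 0 (a positive integer) and C' > 0 such that for every ε = 2^{-j} with j ≥ 0 an integer, there exists a multiset T = {t₁, …, t_{4/ε}} of 4/ε real values, each of the form a/(C/ε) with a an integer satisfying |a| ≤ C'·(1/ε)·log(1/ε)^{C'}, such that the uniform distribution D_T over T satisfies d_K(D_T, Z) ≤ ε, where Z ∼ N(0,1) is a standard Gaussian. -/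
open MeasureTheory ProbabilityTheory Real Set
open scoped NNReal ENNReal

noncomputable def stdG : Measure ℝ := gaussianReal 0 1
noncomputable def Phi (x : ℝ) : ℝ := (stdG (Set.Iic x)).toReal
noncomputable def tailG (x : ℝ) : ℝ := (stdG (Set.Ioi x)).toReal

lemma pdf_eq (x : ℝ) : gaussianPDFReal 0 1 x = (√(2*π))⁻¹ * rexp (-x^2/2) := by
  simp [gaussianPDFReal]

lemma pdf_le (x : ℝ) : gaussianPDFReal 0 1 x ≤ 2/5 := by
  rw [pdf_eq]
  have h1 : (5:ℝ)/2 ≤ √(2*π) := by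
    rw [show (5:ℝ)/2 = √((5/2)^2) by rw [Real.sqrt_sq]; norm_num]
    apply Real.sqrt_le_sqrt
    nlinarith [Real.pi_gt_d6]
  have h2 : rexp (-x^2/2) ≤ 1 := by
    rw [Real.exp_le_one_iff]; nlinarith [sq_nonneg x]
  have h3 : (0:ℝ) < √(2*π) := by positivity
  calc (√(2*π))⁻¹ * rexp (-x^2/2) ≤ (√(2*π))⁻¹ * 1 := by
        apply mul_le_mul_of_nonneg_left h2; positivity
    _ ≤ (5/2:ℝ)⁻¹ := by rw [mul_one]; exact inv_anti₀ (by norm_num) h1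
    _ = 2/5 := by norm_num

lemma pdf_le_exp {x : ℝ} (hx : 2 ≤ x) : gaussianPDFReal 0 1 x ≤ rexp (-x) := by
  rw [pdf_eq]
  have h3 : (1:ℝ) ≤ √(2*π) := by
    rw [show (1:ℝ) = √1 by simp]
    apply Real.sqrt_le_sqrt; nlinarith [Real.pi_gt_d6]
  have h2 : rexp (-x^2/2) ≤ rexp (-x) := by
    apply Real.exp_le_exp.2; nlinarith
  calc (√(2*π))⁻¹ * rexp (-x^2/2) ≤ 1 * rexp (-x) := by
        apply mul_le_mul (by rw [inv_le_one_iff₀]; right; exact h3) h2 (by positivity) (by norm_num)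
    _ = rexp (-x) := one_mul _

instance : IsProbabilityMeasure stdG := by unfold stdG; infer_instance

lemma Phi_nonneg (x : ℝ) : 0 ≤ Phi x := ENNReal.toReal_nonneg

lemma Phi_le_one (x : ℝ) : Phi x ≤ 1 := by
  unfold Phi
  rw [show (1:ℝ) = (1:ENNReal).toReal by simp]
  exact ENNReal.toReal_mono (by simp) prob_le_one

lemma Phi_mono : Monotone Phi := by
  intro a b hab
  unfold Phi
  exact ENNReal.toReal_mono (measure_ne_top _ _) (measure_mono (Set.Iic_subset_Iic.2 hab))

lemma stdG_Ioc_eq (a b : ℝ) (h : a ≤ b) :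
    (stdG (Set.Ioc a b)).toReal = Phi b - Phi a := by
  unfold Phi
  have : Set.Iic b = Set.Iic a ∪ Set.Ioc a b := (Set.Iic_union_Ioc_eq_Iic h).symm
  rw [this, measure_union _ measurableSet_Ioc, ENNReal.toReal_add (measure_ne_top _ _) (measure_ne_top _ _)]
  · ring
  · rw [Set.disjoint_left]; intro x hx hx2; exact absurd hx2.1 (not_lt.2 (Set.mem_Iic.1 hx))

lemma Phi_add_tail (x : ℝ) : Phi x + tailG x = 1 := by
  unfold Phi tailG
  rw [← ENNReal.toReal_add (measure_ne_top _ _) (measure_ne_top _ _)]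
  rw [← measure_union _ measurableSet_Ioi]
  · rw [Set.Iic_union_Ioi, measure_univ]; simp
  · rw [Set.disjoint_left]; intro y hy hy2; exact absurd (Set.mem_Ioi.1 hy2) (not_lt.2 (Set.mem_Iic.1 hy))

lemma tailG_nonneg (x : ℝ) : 0 ≤ tailG x := ENNReal.toReal_nonneg

lemma stdG_apply_integral (s : Set ℝ) :
    (stdG s).toReal = ∫ x in s, gaussianPDFReal 0 1 x := by
  unfold stdG
  rw [gaussianReal_apply_eq_integral 0 one_ne_zero s, ENNReal.toReal_ofReal]
  exact integral_nonneg fun x => gaussianPDFReal_nonneg 0 1 x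

lemma Phi_lip {a b : ℝ} (h : a ≤ b) : Phi b - Phi a ≤ (2/5) * (b - a) := by
  rw [← stdG_Ioc_eq a b h]
  rw [stdG_apply_integral]
  calc (∫ x in Set.Ioc a b, gaussianPDFReal 0 1 x) ≤ ∫ _ in Set.Ioc a b, (2/5 : ℝ) := by
        apply setIntegral_mono_on ((integrable_gaussianPDFReal 0 1).integrableOn)
          (integrableOn_const (by simp [Real.volume_Ioc])) measurableSet_Ioc
        intro x _; exact pdf_le x
    _ = (2/5) * (b - a) := by
        rw [setIntegral_const]
        simp [Real.volume_Ioc, ENNReal.toReal_ofReal (sub_nonneg.2 h)]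
        rw [max_eq_left (sub_nonneg.2 h)]
        ring

lemma tailG_le {x : ℝ} (hx : 2 ≤ x) : tailG x ≤ rexp (-x) := by
  unfold tailG
  rw [stdG_apply_integral]
  calc (∫ u in Set.Ioi x, gaussianPDFReal 0 1 u) ≤ ∫ u in Set.Ioi x, rexp (-u) := by
        apply setIntegral_mono_on ((integrable_gaussianPDFReal 0 1).integrableOn)
          (by simpa using exp_neg_integrableOn_Ioi x one_pos) measurableSet_Ioi
        intro u hu; exact pdf_le_exp (hx.trans (Set.mem_Ioi.1 hu).le)
    _ = rexp (-x) := integral_exp_neg_Ioi x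

lemma stdG_singleton (x : ℝ) : stdG {x} = 0 := by
  unfold stdG
  exact gaussianReal_absolutelyContinuous 0 one_ne_zero (volume_singleton)

lemma Phi_neg (x : ℝ) : Phi (-x) = tailG x := by
  have hmap : (gaussianReal 0 1).map (fun y => (-1 : ℝ) * y) = gaussianReal 0 1 := by
    rw [gaussianReal_map_const_mul (-1 : ℝ)]
    norm_num
  unfold Phi tailG stdG
  have h1 : gaussianReal 0 1 (Set.Iic (-x)) = gaussianReal 0 1 (Set.Ici x) := by
    conv_lhs => rw [← hmap]
    rw [Measure.map_apply (measurable_id'.const_mul (-1)) measurableSet_Iic]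
    congr 1
    ext y
    simp only [Set.mem_preimage, Set.mem_Iic, Set.mem_Ici]
    constructor <;> intro h <;> linarith
  rw [h1, show Set.Ici x = {x} ∪ Set.Ioi x by ext y; simp [le_iff_lt_or_eq, or_comm, eq_comm],
    measure_union _ measurableSet_Ioi]
  · rw [show (gaussianReal 0 1) {x} = 0 from stdG_singleton x, zero_add]
  · simp

lemma Phi_zero : Phi 0 = 1/2 := by
  have h := Phi_add_tail 0
  have h2 : Phi (-0) = tailG 0 := Phi_neg 0
  rw [neg_zero] at h2
  linarith

lemma Phi_cont : Continuous Phi := by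
  have : LipschitzWith (2/5 : ℝ≥0) Phi := by
    apply LipschitzWith.of_dist_le_mul
    intro a b
    rw [Real.dist_eq, Real.dist_eq]
    rcases le_total a b with h | h
    · rw [abs_of_nonpos (by linarith [Phi_mono h]), abs_of_nonpos (by linarith)]
      have := Phi_lip h
      push_cast; linarith
    · rw [abs_of_nonneg (by linarith [Phi_mono h]), abs_of_nonneg (by linarith)]
      have := Phi_lip h
      push_cast; linarith
  exact this.continuous

lemma quantile_exists {p : ℝ} (hp0 : 0 < p) (hp1 : p < 1) : ∃ q : ℝ, Phi q = p := by
  obtain ⟨a, ha⟩ : ∃ a : ℝ, Phi a ≤ p := by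
    refine ⟨-(max 2 (-Real.log p)), ?_⟩
    rw [Phi_neg]
    calc tailG (max 2 (-Real.log p)) ≤ rexp (-(max 2 (-Real.log p))) := tailG_le (le_max_left _ _)
      _ ≤ rexp (Real.log p) := by apply Real.exp_le_exp.2; have := le_max_right 2 (-Real.log p); linarith
      _ = p := Real.exp_log hp0
  obtain ⟨b, hb⟩ : ∃ b : ℝ, p ≤ Phi b := by
    refine ⟨max 2 (-Real.log (1-p)), ?_⟩
    have h1 : tailG (max 2 (-Real.log (1-p))) ≤ 1 - p := by
      calc tailG (max 2 (-Real.log (1-p))) ≤ rexp (-(max 2 (-Real.log (1-p)))) := tailG_le (le_max_left _ _)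
        _ ≤ rexp (Real.log (1-p)) := by
            apply Real.exp_le_exp.2; have := le_max_right 2 (-Real.log (1-p)); linarith
        _ = 1 - p := Real.exp_log (by linarith)
    have := Phi_add_tail (max 2 (-Real.log (1-p)))
    linarith
  rcases le_total a b with hab | hab
  · have := intermediate_value_Icc hab Phi_cont.continuousOn
    obtain ⟨q, _, hq⟩ := this ⟨ha, hb⟩
    exact ⟨q, hq⟩
  · have h1 := Phi_mono hab
    exact ⟨a, le_antisymm ha (hb.trans h1)⟩

/-- The Kolmogorov distance between two measures on ℝ. -/
noncomputable def kolDist (μ ν : Measure ℝ) : ℝ :=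
  ⨆ t : ℝ, |(μ (Set.Iic t)).toReal - (ν (Set.Iic t)).toReal|

/-- The uniform distribution over the multiset {t₁, …, t_R} of reals. -/
noncomputable def unifMulti {R : ℕ} (t : Fin R → ℝ) : Measure ℝ :=
  (R : ENNReal)⁻¹ • ∑ i, Measure.dirac (t i)

lemma unifMulti_cdf {R : ℕ} (hR : 0 < R) (t : Fin R → ℝ) (s : ℝ) :
    ((unifMulti t) (Set.Iic s)).toReal
      = (Finset.univ.filter (fun i => t i ≤ s)).card / R := by
  unfold unifMulti
  rw [Measure.smul_apply, Measure.coe_finset_sum, Finset.sum_apply]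
  have h1 : ∀ i : Fin R, Measure.dirac (t i) (Set.Iic s)
      = if t i ≤ s then (1 : ENNReal) else 0 := by
    intro i
    rw [Measure.dirac_apply' _ measurableSet_Iic]
    by_cases h : t i ≤ s
    · simp [Set.indicator, h]
    · simp [Set.indicator, h]
  rw [Finset.sum_congr rfl fun i _ => h1 i, Finset.sum_boole]
  simp only [smul_eq_mul]
  rw [ENNReal.toReal_mul]
  rw [ENNReal.toReal_inv, ENNReal.toReal_natCast, ENNReal.toReal_natCast]
  ring

lemma key_bound {R : ℕ} (hR : 0 < R) (t : Fin R → ℝ) (hmono : Monotone t) (β : ℝ)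
    (h : ∀ i : Fin R, |Phi (t i) - (2 * (i : ℝ) + 1) / (2 * R)| ≤ β) (s : ℝ) :
    |((unifMulti t) (Set.Iic s)).toReal - Phi s| ≤ 1 / (2 * R) + β := by
  have hβ : 0 ≤ β := le_trans (abs_nonneg _) (h ⟨0, hR⟩)
  rw [unifMulti_cdf hR t s]
  set S := Finset.univ.filter (fun i => t i ≤ s) with hS
  set k := S.card with hk
  have hRpos : (0:ℝ) < R := Nat.cast_pos.2 hR
  have hkR : k ≤ R := le_trans (Finset.card_filter_le _ _) (by simp)
  have hdown : ∀ i i' : Fin R, i ≤ i' → i' ∈ S → i ∈ S := by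
    intro i i' hii hi'
    simp only [hS, Finset.mem_filter, Finset.mem_univ, true_and] at hi' ⊢
    exact le_trans (hmono hii) hi'
  rw [abs_le]
  constructor
  · -- Phi s - k/R ≤ 1/(2R)+β, i.e. -(1/(2R)+β) ≤ k/R - Phi s
    rcases lt_or_eq_of_le hkR with hlt | heq
    · set i₀ : Fin R := ⟨k, hlt⟩ with hi₀
      have hti₀ : s < t i₀ := by
        by_contra hcon
        push_neg at hcon
        have hmem : i₀ ∈ S := by simp [hS, hcon]
        have hsub : Finset.Iic i₀ ⊆ S := fun x hx => hdown x i₀ (Finset.mem_Iic.1 hx) hmem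
        have hcard : (Finset.Iic i₀).card = k + 1 := by
          rw [Fin.card_Iic]
        have := Finset.card_le_card hsub
        omega
      have h1 : Phi s ≤ Phi (t i₀) := Phi_mono hti₀.le
      have h2 : Phi (t i₀) ≤ (2 * (k : ℝ) + 1) / (2 * R) + β := by
        have h5 : Phi (t i₀) - (2 * ((i₀ : ℕ) : ℝ) + 1) / (2 * R) ≤ β := (abs_le.1 (h i₀)).2
        have h6 : ((i₀ : ℕ) : ℝ) = (k : ℝ) := by simp [hi₀]
        rw [h6] at h5
        linarith
      have : Phi s ≤ (2 * (k : ℝ) + 1) / (2 * R) + β := h1.trans h2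
      have hexp : (2 * (k : ℝ) + 1) / (2 * R) = (k : ℝ) / R + 1 / (2 * R) := by
        field_simp
      linarith
    · have h7 : ((k : ℝ) / R) = 1 := by rw [heq]; field_simp
      have h8 := Phi_le_one s
      have h9 : (0:ℝ) < 1 / (2 * (R:ℝ)) := by positivity
      linarith
  · -- k/R - Phi s ≤ 1/(2R)+β
    rcases Nat.eq_zero_or_pos k with h0 | hpos
    · rw [h0]
      simp only [Nat.cast_zero, zero_div, zero_sub]
      have := Phi_nonneg s
      have h9 : (0:ℝ) < 1 / (2 * (R:ℝ)) := by positivity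
      linarith
    · have hne : S.Nonempty := Finset.card_pos.1 hpos
      set m := S.max' hne with hm
      have hmem : m ∈ S := S.max'_mem hne
      have hsub : S ⊆ Finset.Iic m := fun x hx => Finset.mem_Iic.2 (S.le_max' x hx)
      have hcard : k ≤ (m : ℕ) + 1 := by
        have := Finset.card_le_card hsub
        rwa [Fin.card_Iic] at this
      have htm : t m ≤ s := by
        have := hmem
        simp only [hS, Finset.mem_filter] at this
        exact this.2
      have h1 : Phi (t m) ≤ Phi s := Phi_mono htm
      have h2 : (2 * ((m : ℕ) : ℝ) + 1) / (2 * R) - β ≤ Phi (t m) := by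
        have := (abs_le.1 (h m)).1
        linarith
      have h3 : (k : ℝ) ≤ ((m : ℕ) : ℝ) + 1 := by exact_mod_cast hcard
      have h4 : (k : ℝ) / R ≤ (((m : ℕ) : ℝ) + 1) / R := by
        gcongr
      have hEq : (((m : ℕ) : ℝ) + 1) / R - (2 * ((m : ℕ) : ℝ) + 1) / (2 * R) = 1 / (2 * R) := by
        field_simp; ring
      linarith

lemma kolDist_le_of {μ : Measure ℝ} {c : ℝ} (h : ∀ s : ℝ, |(μ (Set.Iic s)).toReal - Phi s| ≤ c) :
    kolDist μ stdG ≤ c := ciSup_le h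

lemma zero_case {R : ℕ} (hR : 0 < R) :
    kolDist (unifMulti (fun _ : Fin R => (0:ℝ))) stdG ≤ 1/2 := by
  apply kolDist_le_of
  intro s
  rw [unifMulti_cdf hR]
  by_cases h : (0:ℝ) ≤ s
  · have h1 : (Finset.univ.filter (fun _ : Fin R => (0:ℝ) ≤ s)) = Finset.univ := by
      simp [Finset.filter_true_of_mem, h]
    rw [h1, Finset.card_univ, Fintype.card_fin]
    have h2 : (R:ℝ)/(R:ℝ) = 1 := by
      field_simp
    rw [h2]
    have h3 : Phi 0 ≤ Phi s := Phi_mono h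
    rw [Phi_zero] at h3
    have h4 := Phi_le_one s
    rw [abs_le]; constructor <;> linarith
  · have h1 : (Finset.univ.filter (fun _ : Fin R => (0:ℝ) ≤ s)) = ∅ := by
      simp [Finset.filter_false_of_mem, h]
    rw [h1]
    simp only [Finset.card_empty, Nat.cast_zero, zero_div, zero_sub, abs_neg]
    have h3 : Phi s ≤ Phi 0 := Phi_mono (le_of_not_ge h)
    rw [Phi_zero] at h3
    have h4 := Phi_nonneg s
    rw [abs_le]; constructor <;> linarith

set_option maxHeartbeats 1000000 in
/-- There are absolute constants C > 0 (a positive integer) and C' > 0 such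
that for every ε = 2^{-j} (j ∈ ℕ) there is a multiset T of 4/ε reals, each of the form
a/(C/ε) with a ∈ ℤ, |a| ≤ C'·(1/ε)·log(1/ε)^{C'}, with d_K(D_T, N(0,1)) ≤ ε. -/
theorem stmt_10 : ∃ C : ℕ, 0 < C ∧ ∃ C' : ℝ, 0 < C' ∧
    ∀ j : ℕ, ∃ t : Fin (4 * 2 ^ j) → ℝ,
      (∀ i, ∃ a : ℤ, t i = (a : ℝ) / ((C : ℝ) * 2 ^ j) ∧
        |(a : ℝ)| ≤ C' * 2 ^ j * (Real.log ((2 : ℝ) ^ j)) ^ C') ∧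
      kolDist (unifMulti t) (gaussianReal 0 1) ≤ ((2 : ℝ) ^ j)⁻¹ := by
  refine ⟨1, one_pos, 3, by norm_num, fun j => ?_⟩
  have hR : 0 < 4 * 2 ^ j := by positivity
  have hlog : (0:ℝ) ≤ Real.log ((2:ℝ)^j) := Real.log_nonneg (one_le_pow₀ (by norm_num))
  by_cases hj : j < 2
  · refine ⟨fun _ => (0:ℝ), fun i => ⟨0, by simp, ?_⟩, ?_⟩
    · rw [Int.cast_zero, abs_zero]
      exact mul_nonneg (by positivity) (Real.rpow_nonneg hlog _)
    · refine le_trans (zero_case hR) ?_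
      interval_cases j <;> norm_num
  push_neg at hj
  set R := 4 * 2 ^ j with hRdef
  have hRcast : ((R:ℕ):ℝ) = 4 * 2^j := by rw [hRdef]; push_cast; ring
  have h2j : (0:ℝ) < (2:ℝ)^j := by positivity
  set ε : ℝ := ((2:ℝ)^j)⁻¹ with hεdef
  have hε : 0 < ε := by positivity
  have hp : ∀ i : Fin R, 0 < (2*(i:ℝ)+1)/(2*(R:ℝ)) ∧ (2*(i:ℝ)+1)/(2*(R:ℝ)) < 1 := by
    intro i
    have hi : ((i:ℕ):ℝ) + 1 ≤ (R:ℝ) := by exact_mod_cast Nat.succ_le_of_lt i.2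
    have hR0 : (0:ℝ) < (R:ℝ) := by rw [hRcast]; positivity
    constructor
    · positivity
    · rw [div_lt_one (by positivity)]; linarith
  choose q hq using fun i : Fin R => quantile_exists (hp i).1 (hp i).2
  have hqmono : Monotone q := by
    intro i i' hii
    rcases eq_or_lt_of_le hii with rfl | hlt
    · exact le_refl _
    · by_contra hcon
      push_neg at hcon
      have h1 := Phi_mono hcon.le
      rw [hq, hq] at h1
      have hR0 : (0:ℝ) < (R:ℝ) := by rw [hRcast]; positivity
      rw [div_le_div_iff₀ (by positivity) (by positivity)] at h1
      have hii' : ((i:ℕ):ℝ) < ((i':ℕ):ℝ) := by exact_mod_cast hlt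
      nlinarith
  set A : ℤ := ((j:ℤ)+2) * 2^j with hAdef
  have hA0 : (0:ℤ) ≤ A := by positivity
  set b : Fin R → ℤ := fun i => ⌊q i * 2^j⌋ with hbdef
  set a : Fin R → ℤ := fun i => max (-A) (min A (b i)) with hadef
  set t : Fin R → ℝ := fun i => ((a i : ℝ))/(((1:ℕ):ℝ) * 2^j) with htdef
  have ht' : ∀ i, t i = (a i : ℝ) * ε := by
    intro i; rw [htdef, hεdef]; push_cast; field_simp
  have hAcast : ((A:ℤ):ℝ) * ε = (j:ℝ) + 2 := by
    rw [hAdef, hεdef]; push_cast; field_simp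
  set M : ℝ := (j:ℝ) + 2 with hMdef
  have hM2 : (2:ℝ) ≤ M := by rw [hMdef]; have : (0:ℝ) ≤ (j:ℝ) := Nat.cast_nonneg j; linarith
  have htail : tailG M ≤ ε/4 := by
    refine le_trans (tailG_le hM2) ?_
    have h2e : (2:ℝ) ≤ rexp 1 := by have := Real.exp_one_gt_d9; linarith
    have hpow : (2:ℝ)^(j+2) ≤ rexp 1 ^ (j+2) := pow_le_pow_left₀ (by norm_num) h2e _
    have hexp : rexp 1 ^ (j+2) = rexp (((j:ℕ):ℝ) + 2) := by
      rw [← Real.exp_nat_mul]; push_cast; ring_nf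
    rw [hexp] at hpow
    have hMexp : rexp (-M) = (rexp M)⁻¹ := Real.exp_neg M
    rw [hMexp]
    have h1 : (0:ℝ) < (2:ℝ)^(j+2) := by positivity
    have h2 : (rexp M)⁻¹ ≤ ((2:ℝ)^(j+2))⁻¹ := by
      apply inv_anti₀ h1
      rw [hMdef]
      exact_mod_cast hpow
    refine h2.trans (le_of_eq ?_)
    rw [hεdef, pow_add, mul_inv, div_eq_mul_inv]
    norm_num
  have hmono : Monotone t := by
    intro i i' hii
    rw [ht' i, ht' i']
    apply mul_le_mul_of_nonneg_right _ hε.le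
    have hb : b i ≤ b i' := Int.floor_le_floor (mul_le_mul_of_nonneg_right (hqmono hii) h2j.le)
    have : a i ≤ a i' := max_le_max (le_refl _) (min_le_min (le_refl _) hb)
    exact_mod_cast this
  have herr : ∀ i : Fin R, |Phi (t i) - (2*(i:ℝ)+1)/(2*(R:ℝ))| ≤ (2/5)*ε + ε/4 := by
    intro i
    have hp0 := (hp i).1
    have hp1 := (hp i).2
    rcases lt_or_ge A (b i) with h1 | h1
    · -- clamp high
      have ha : a i = A := by
        rw [hadef]
        simp only
        rw [min_eq_left h1.le, max_eq_right (neg_le_self hA0)]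
      have htM : t i = M := by rw [ht' i, ha, hAcast]
      have hqM : M < q i := by
        have hfl : ((b i : ℤ):ℝ) ≤ q i * 2^j := Int.floor_le _
        have hAb : ((A:ℤ):ℝ) + 1 ≤ ((b i : ℤ):ℝ) := by exact_mod_cast h1
        have : ((A:ℤ):ℝ) < q i * 2^j := by linarith
        have hlt2 : ((A:ℤ):ℝ) * ε < q i := by
          rw [hεdef, inv_eq_one_div, mul_one_div, div_lt_iff₀ h2j]
          linarith
        rwa [hAcast] at hlt2
      have h2 : Phi M ≤ Phi (q i) := Phi_mono hqM.le
      rw [hq] at h2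
      have h3 := Phi_add_tail M
      rw [htM, abs_le]
      constructor <;> nlinarith [hε]
    · rcases lt_or_ge (b i) (-A) with h2 | h2
      · -- clamp low
        have ha : a i = -A := by
          rw [hadef]
          simp only
          rw [min_eq_right (h2.le.trans (neg_le_self hA0)), max_eq_left h2.le]
        have htM : t i = -M := by
          rw [ht' i, ha]
          push_cast
          rw [neg_mul]
          rw [show ((A:ℤ):ℝ) * ε = M from hAcast]
        have hqM : q i < -M := by
          have hfl : q i * 2^j < ((b i : ℤ):ℝ) + 1 := Int.lt_floor_add_one _
          have hAb : ((b i : ℤ):ℝ) + 1 ≤ -((A:ℤ):ℝ) := by exact_mod_cast h2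
          have hlt : q i * 2^j < -((A:ℤ):ℝ) := by linarith
          have : q i < -((A:ℤ):ℝ) * ε := by
            rw [hεdef, inv_eq_one_div, mul_one_div, lt_div_iff₀ h2j]
            linarith
          rw [neg_mul] at this
          rw [show ((A:ℤ):ℝ) * ε = M from hAcast] at this
          exact this
        have h3 : Phi (q i) ≤ Phi (-M) := Phi_mono hqM.le
        rw [hq] at h3
        have h4 : Phi (-M) = tailG M := Phi_neg M
        rw [htM, abs_le]
        constructor <;> nlinarith [hε]
      · -- no clamp
        have ha : a i = b i := by
          rw [hadef]
          simp only
          rw [min_eq_right h1, max_eq_right h2]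
        have hfl : ((b i : ℤ):ℝ) ≤ q i * 2^j := Int.floor_le _
        have hfl2 : q i * 2^j < ((b i : ℤ):ℝ) + 1 := Int.lt_floor_add_one _
        have hti : t i ≤ q i := by
          rw [ht' i, ha, hεdef, inv_eq_one_div, mul_one_div, div_le_iff₀ h2j]
          linarith
        have hti2 : q i - t i ≤ ε := by
          rw [ht' i, ha, hεdef, inv_eq_one_div, mul_one_div, sub_le_iff_le_add,
            ← add_div, le_div_iff₀ h2j]
          linarith
        have h3 : Phi (t i) ≤ Phi (q i) := Phi_mono hti
        have h4 := Phi_lip hti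
        rw [hq] at h3 h4
        rw [abs_le]
        constructor <;> nlinarith [hε]
  have hkey := key_bound hR t hmono ((2/5)*ε + ε/4) herr
  refine ⟨t, fun i => ⟨a i, by rw [htdef], ?_⟩, ?_⟩
  · -- |a| bound
    have habs : |a i| ≤ A := by
      rw [abs_le]
      exact ⟨le_max_left _ _, max_le (neg_le_self hA0) (min_le_left _ _)⟩
    have habsR : |(a i : ℝ)| ≤ ((A:ℤ):ℝ) := by exact_mod_cast habs
    rw [Real.log_pow, show (3:ℝ) = ((3:ℕ):ℝ) by norm_num, Real.rpow_natCast]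
    have hl : (0.6931471803:ℝ) < Real.log 2 := Real.log_two_gt_d9
    have hjr : (2:ℝ) ≤ (j:ℝ) := by exact_mod_cast hj
    have hAval : ((A:ℤ):ℝ) = ((j:ℝ)+2) * 2^j := by rw [hAdef]; push_cast; ring
    refine habsR.trans ?_
    rw [hAval]
    have h3 : 4*(j:ℝ) ≤ (j:ℝ)^3 := by nlinarith [mul_nonneg (mul_nonneg (by linarith : (0:ℝ) ≤ (j:ℝ)-2) (by linarith : (0:ℝ) ≤ (j:ℝ))) (by linarith : (0:ℝ) ≤ (j:ℝ)+2)]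
    have h1 : (0.33:ℝ) ≤ Real.log 2 ^ 3 := by
      calc (0.33:ℝ) ≤ 0.6931471803^3 := by norm_num
        _ ≤ Real.log 2 ^ 3 := pow_le_pow_left₀ (by norm_num) hl.le 3
    have key : (j:ℝ) + 2 ≤ 3 * (((j:ℕ):ℝ) * Real.log 2)^3 := by
      have h5 : 3 * ((j:ℝ) * Real.log 2)^3 = 3 * ((j:ℝ)^3 * Real.log 2 ^ 3) := by ring
      rw [h5]
      nlinarith [mul_le_mul h3 h1 (by norm_num) (by positivity : (0:ℝ) ≤ (j:ℝ)^3)]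
    calc ((j:ℝ)+2) * 2^j ≤ (3 * (((j:ℕ):ℝ) * Real.log 2)^3) * 2^j := by nlinarith [h2j]
      _ = 3 * 2^j * (((j:ℕ):ℝ) * Real.log 2)^3 := by ring
  · -- kolDist
    refine le_trans (kolDist_le_of hkey) ?_
    have hRR : 1/(2*((R:ℕ):ℝ)) = ε/8 := by
      rw [hRcast, hεdef]; field_simp; ring
    rw [hRR]
    linarith
end

section
/- Let A' ∈ ℝ^{n×n} be a symmetric matrix all of whose eigenvalues λ'₁, …, λ'ₙ are non-negative, with corresponding orthonormal eigenvectors v₁, …, vₙ, and let λ_max(A') denote its largest eigenvalue. Let δ ∈ (0,1) and let w be a unit vector with ‖A'·w‖₂² ≥ (1−δ)²·λ_max(A')². Write w = Σ_{i=1}^n c_i·v_i and let S = {i ∈ [n] : λ'_i ≥ (1−√δ)·λ_max(A')}. Then Σ_{i∉S} c_i² ≤ 2√δ. -/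
open Matrix

lemma aux_sum_dotProduct {ι n : Type*} [Fintype n] (s : Finset ι)
    (f : ι → n → ℝ) (u : n → ℝ) :
    (∑ i ∈ s, f i) ⬝ᵥ u = ∑ i ∈ s, f i ⬝ᵥ u := by
  simp only [dotProduct, Finset.sum_apply, Finset.sum_mul]
  rw [Finset.sum_comm]

lemma aux_dotProduct_sum {ι n : Type*} [Fintype n] (s : Finset ι)
    (u : n → ℝ) (f : ι → n → ℝ) :
    u ⬝ᵥ (∑ i ∈ s, f i) = ∑ i ∈ s, u ⬝ᵥ f i := by
  simp only [dotProduct, Finset.sum_apply, Finset.mul_sum]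
  rw [Finset.sum_comm]

lemma aux_key {n : ℕ} (v : Fin n → (Fin n → ℝ))
    (horth : ∀ i j, v i ⬝ᵥ v j = if i = j then 1 else 0)
    (a b : Fin n → ℝ) :
    (∑ i, a i • v i) ⬝ᵥ (∑ i, b i • v i) = ∑ i, a i * b i := by
  rw [aux_sum_dotProduct]
  refine Finset.sum_congr rfl fun i _ => ?_
  rw [aux_dotProduct_sum]
  simp [smul_dotProduct, dotProduct_smul, horth, mul_ite, Finset.sum_ite_eq, mul_comm]

/-- Let A' be symmetric with non-negative eigenvalues λ'ᵢ and orthonormal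
eigenvectors vᵢ, largest eigenvalue λmax.  If w is a unit vector with
‖A'w‖₂² ≥ (1−δ)²·λmax², writing w = Σ cᵢ vᵢ and S = {i : λ'ᵢ ≥ (1−√δ)·λmax}, then
Σ_{i∉S} cᵢ² ≤ 2√δ. -/
theorem stmt_12 {n : ℕ} (A' : Matrix (Fin n) (Fin n) ℝ) (hA' : A'.IsSymm)
    (lam : Fin n → ℝ) (v : Fin n → (Fin n → ℝ))
    (horth : ∀ i j, v i ⬝ᵥ v j = if i = j then 1 else 0)
    (heig : ∀ i, A'.mulVec (v i) = lam i • v i)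
    (hpos : ∀ i, 0 ≤ lam i)
    (lmax : ℝ) (hmax : ∀ i, lam i ≤ lmax) (hmem : ∃ i, lam i = lmax)
    (δ : ℝ) (hδ0 : 0 < δ) (hδ1 : δ < 1)
    (w : Fin n → ℝ) (hw : w ⬝ᵥ w = 1)
    (hAw : (1 - δ) ^ 2 * lmax ^ 2 ≤ A'.mulVec w ⬝ᵥ A'.mulVec w)
    (c : Fin n → ℝ) (hc : w = ∑ i, c i • v i) :
    ∑ i ∈ Finset.univ.filter (fun i => lam i < (1 - Real.sqrt δ) * lmax), (c i) ^ 2 ≤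
      2 * Real.sqrt δ := by
  have hs0 : 0 < Real.sqrt δ := Real.sqrt_pos.2 hδ0
  have hs1 : Real.sqrt δ < 1 := by
    rw [show (1:ℝ) = Real.sqrt 1 by simp]
    exact Real.sqrt_lt_sqrt hδ0.le hδ1
  have hsq : Real.sqrt δ ^ 2 = δ := Real.sq_sqrt hδ0.le
  -- A'w in the eigenbasis
  have hAw' : A'.mulVec w = ∑ i, (c i * lam i) • v i := by
    rw [hc, ← Matrix.mulVecLin_apply, map_sum]
    refine Finset.sum_congr rfl fun i _ => ?_
    rw [LinearMap.map_smul, Matrix.mulVecLin_apply, heig, smul_smul]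
  -- norms
  have hn : (∑ i, (c i) ^ 2) = 1 := by
    have h := aux_key v horth c c
    rw [← hc, hw] at h
    simpa [pow_two] using h.symm
  have hAn : (1 - δ) ^ 2 * lmax ^ 2 ≤ ∑ i, (c i * lam i) ^ 2 := by
    have h := aux_key v horth (fun i => c i * lam i) (fun i => c i * lam i)
    rw [← hAw'] at h
    calc (1 - δ) ^ 2 * lmax ^ 2 ≤ A'.mulVec w ⬝ᵥ A'.mulVec w := hAw
      _ = ∑ i, (c i * lam i) ^ 2 := by rw [h]; exact Finset.sum_congr rfl fun i _ => by ring
  set thr : ℝ := (1 - Real.sqrt δ) * lmax with hthr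
  set Sc := Finset.univ.filter (fun i => lam i < thr) with hSc
  set T : ℝ := ∑ i ∈ Sc, (c i) ^ 2 with hT
  have hT0 : 0 ≤ T := Finset.sum_nonneg fun i _ => sq_nonneg _
  have hTc : ∑ i ∈ Finset.univ.filter (fun i => ¬ lam i < thr), (c i) ^ 2 = 1 - T := by
    have := Finset.sum_filter_add_sum_filter_not Finset.univ
      (fun i => lam i < thr) (fun i => (c i) ^ 2)
    rw [hn] at this
    linarith [this]
  have hlmax0 : 0 ≤ lmax := by
    obtain ⟨i, hi⟩ := hmem
    exact hi ▸ hpos i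
  rcases eq_or_lt_of_le hlmax0 with hL | hL
  · -- lmax = 0 : the filter set is empty
    have : T = 0 := by
      rw [hT]
      refine Finset.sum_eq_zero fun i hi => ?_
      rw [hSc, Finset.mem_filter] at hi
      exfalso
      have : thr ≤ 0 := by rw [hthr, ← hL]; simp
      exact absurd (lt_of_lt_of_le hi.2 this) (not_lt.2 (hpos i))
    rw [this]
    positivity
  · -- lmax > 0
    have hthr0 : 0 ≤ thr := by
      rw [hthr]
      have : (0:ℝ) ≤ 1 - Real.sqrt δ := by linarith
      positivity
    -- bound the eigen-sum on each part
    have hb1 : ∑ i ∈ Sc, (c i * lam i) ^ 2 ≤ thr ^ 2 * T := by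
      rw [hT, Finset.mul_sum]
      refine Finset.sum_le_sum fun i hi => ?_
      rw [hSc, Finset.mem_filter] at hi
      have h1 : lam i ^ 2 ≤ thr ^ 2 := by
        apply sq_le_sq' <;> nlinarith [hpos i, hi.2]
      calc (c i * lam i) ^ 2 = lam i ^ 2 * c i ^ 2 := by ring
        _ ≤ thr ^ 2 * c i ^ 2 := by nlinarith [sq_nonneg (c i)]
    have hb2 : ∑ i ∈ Finset.univ.filter (fun i => ¬ lam i < thr), (c i * lam i) ^ 2
        ≤ lmax ^ 2 * (1 - T) := by
      rw [← hTc, Finset.mul_sum]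
      refine Finset.sum_le_sum fun i _ => ?_
      have h1 : lam i ^ 2 ≤ lmax ^ 2 := by
        apply sq_le_sq' <;> nlinarith [hpos i, hmax i]
      calc (c i * lam i) ^ 2 = lam i ^ 2 * c i ^ 2 := by ring
        _ ≤ lmax ^ 2 * c i ^ 2 := by nlinarith [sq_nonneg (c i)]
    have hsplit : ∑ i, (c i * lam i) ^ 2
        = ∑ i ∈ Sc, (c i * lam i) ^ 2
          + ∑ i ∈ Finset.univ.filter (fun i => ¬ lam i < thr), (c i * lam i) ^ 2 :=
      (Finset.sum_filter_add_sum_filter_not Finset.univ _ _).symm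
    have hmain : (1 - δ) ^ 2 * lmax ^ 2 ≤ thr ^ 2 * T + lmax ^ 2 * (1 - T) := by
      rw [hsplit] at hAn; linarith
    -- conclude:  T * (1 − (1−√δ)²) ≤ 1 − (1−δ)²
    rw [hthr] at hmain
    have hml : (0:ℝ) < lmax ^ 2 := by positivity
    have h2 : (1 - δ) ^ 2 ≤ (1 - Real.sqrt δ) ^ 2 * T + (1 - T) := by
      refine le_of_mul_le_mul_right ?_ hml
      calc (1 - δ) ^ 2 * lmax ^ 2
          ≤ ((1 - Real.sqrt δ) * lmax) ^ 2 * T + lmax ^ 2 * (1 - T) := hmain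
        _ = ((1 - Real.sqrt δ) ^ 2 * T + (1 - T)) * lmax ^ 2 := by ring
    nlinarith [h2, hsq, hs0, hs1, hT0, sq_nonneg (1 - Real.sqrt δ),
      mul_pos hs0 (sub_pos.2 hs1), sq_nonneg (Real.sqrt δ)]
end
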